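/- Let T' be a finite tree containing three distinct vertices a, b, v forming a path a–b–v, where a has degree 1 in T' and b has degree 2 in T', and let T be the tree obtained from T' by adding a new vertex u and the edge vu. Then γ₂(T) = γ₂(T') + 1 and α₂(T) = α₂(T') + 1; in particular α₂(T) − γ₂(T) = α₂(T') − γ₂(T'). -/

import Mathlib

open SimpleGraph

/-- `S` is a `k`-dominating set of the subgraph of `G` induced by `U`:
`S ⊆ U` and every vertex of `U` not in `S` has at least `k` neighbors in `S`. -/
def IsKDomOn {V : Type*} (G : SimpleGraph V) (k : ℕ) (U S : Set V) : Prop :=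
  S ⊆ U ∧ ∀ v ∈ U, v ∉ S → k ≤ (G.neighborSet v ∩ S).ncard

/-- `S` is a `k`-independent set of the subgraph of `G` induced by `U`:
`S ⊆ U` and every vertex of `S` has at most `k - 1` neighbors in `S`. -/
def IsKIndOn {V : Type*} (G : SimpleGraph V) (k : ℕ) (U S : Set V) : Prop :=
  S ⊆ U ∧ ∀ v ∈ S, (G.neighborSet v ∩ S).ncard ≤ k - 1

/-- The `k`-domination number of the subgraph of `G` induced by `U`. -/
noncomputable def gammaK {V : Type*} (G : SimpleGraph V) (k : ℕ) (U : Set V) : ℕ :=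
  sInf {n | ∃ S, IsKDomOn G k U S ∧ S.ncard = n}

/-- The `k`-independence number of the subgraph of `G` induced by `U`. -/
noncomputable def alphaK {V : Type*} (G : SimpleGraph V) (k : ℕ) (U : Set V) : ℕ :=
  sSup {n | ∃ S, IsKIndOn G k U S ∧ S.ncard = n}

section helpers
variable {V : Type*}

lemma gammaK_le {G : SimpleGraph V} {k : ℕ} {U S : Set V} (h : IsKDomOn G k U S) :
    gammaK G k U ≤ S.ncard := Nat.sInf_le ⟨S, h, rfl⟩

lemma gammaK_exists (G : SimpleGraph V) (k : ℕ) (U : Set V) :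
    ∃ S, IsKDomOn G k U S ∧ S.ncard = gammaK G k U := by
  have hne : {n | ∃ S, IsKDomOn G k U S ∧ S.ncard = n}.Nonempty :=
    ⟨U.ncard, U, ⟨subset_rfl, fun v hv hv' => absurd hv hv'⟩, rfl⟩
  obtain ⟨S, hS, h⟩ := Nat.sInf_mem hne
  exact ⟨S, hS, h⟩

variable [Finite V]

lemma alphaK_bdd (G : SimpleGraph V) (k : ℕ) (U : Set V) :
    BddAbove {n | ∃ S, IsKIndOn G k U S ∧ S.ncard = n} := by
  refine ⟨Nat.card V, ?_⟩
  rintro n ⟨S, _, rfl⟩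
  exact (Set.ncard_le_ncard (Set.subset_univ S) Set.finite_univ).trans_eq (Set.ncard_univ V)

lemma le_alphaK {G : SimpleGraph V} {k : ℕ} {U S : Set V} (h : IsKIndOn G k U S) :
    S.ncard ≤ alphaK G k U := le_csSup (alphaK_bdd G k U) ⟨S, h, rfl⟩

lemma alphaK_exists (G : SimpleGraph V) (k : ℕ) (U : Set V) :
    ∃ S, IsKIndOn G k U S ∧ S.ncard = alphaK G k U := by
  have hne : {n | ∃ S, IsKIndOn G k U S ∧ S.ncard = n}.Nonempty :=
    ⟨0, ∅, ⟨Set.empty_subset _, fun v hv => absurd hv (Set.notMem_empty v)⟩, by simp⟩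
  obtain ⟨S, hS, h⟩ := Nat.sSup_mem hne (alphaK_bdd G k U)
  exact ⟨S, hS, h⟩

end helpers

theorem stmt8 {V : Type*} [Fintype V] (T' : SimpleGraph V) (hT' : T'.IsTree)
    (a b v : V) (hdist : ([a, b, v] : List V).Pairwise (· ≠ ·))
    (hab : T'.Adj a b) (hbv : T'.Adj b v)
    (hda : (T'.neighborSet a).ncard = 1) (hdb : (T'.neighborSet b).ncard = 2)
    (T : SimpleGraph (V ⊕ Unit))
    (hadj : ∀ a b, T.Adj a b ↔
      ((∃ x y, T'.Adj x y ∧ a = Sum.inl x ∧ b = Sum.inl y) ∨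
       (a = Sum.inl v ∧ b = (Sum.inr () : V ⊕ Unit)) ∨ (a = (Sum.inr () : V ⊕ Unit) ∧ b = Sum.inl v))) :
    gammaK T 2 Set.univ = gammaK T' 2 Set.univ + 1 ∧
    alphaK T 2 Set.univ = alphaK T' 2 Set.univ + 1 ∧
    (alphaK T 2 Set.univ : ℤ) - (gammaK T 2 Set.univ : ℤ) =
      (alphaK T' 2 Set.univ : ℤ) - (gammaK T' 2 Set.univ : ℤ) := by
  classical
  have hab' : a ≠ b := by simp at hdist; tauto
  have hav : a ≠ v := by simp at hdist; tauto
  have hbv' : b ≠ v := by simp at hdist; tauto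
  have hNa : T'.neighborSet a = {b} := by
    obtain ⟨c, hc⟩ := Set.ncard_eq_one.mp hda
    have hbmem : b ∈ T'.neighborSet a := hab
    rw [hc] at hbmem ⊢
    simp only [Set.mem_singleton_iff] at hbmem
    rw [hbmem]
  have hNb : T'.neighborSet b = {a, v} := by
    obtain ⟨x, y, hxy, hset⟩ := Set.ncard_eq_two.mp hdb
    have hamem : a ∈ T'.neighborSet b := hab.symm
    have hvmem : v ∈ T'.neighborSet b := hbv
    rw [hset] at hamem hvmem ⊢
    simp only [Set.mem_insert_iff, Set.mem_singleton_iff] at hamem hvmem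
    rcases hamem with rfl | rfl <;> rcases hvmem with rfl | rfl
    · exact absurd rfl hav
    · rfl
    · rw [Set.pair_comm]
    · exact absurd rfl hav
  have hmem : ∀ (x : V) (w : V ⊕ Unit), w ∈ T.neighborSet (Sum.inl x) ↔
      ((∃ y, T'.Adj x y ∧ w = Sum.inl y) ∨ (x = v ∧ w = Sum.inr ())) := by
    intro x w
    rw [SimpleGraph.mem_neighborSet, hadj]
    constructor
    · rintro (⟨p, q, hpq, hp, hq⟩ | ⟨h1, h2⟩ | ⟨h1, h2⟩)
      · rw [Sum.inl.injEq] at hp; subst hp; exact Or.inl ⟨q, hpq, hq⟩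
      · rw [Sum.inl.injEq] at h1; exact Or.inr ⟨h1, h2⟩
      · exact absurd h1 (by simp)
    · rintro (⟨y, hy, rfl⟩ | ⟨rfl, rfl⟩)
      · exact Or.inl ⟨x, y, hy, rfl, rfl⟩
      · exact Or.inr (Or.inl ⟨rfl, rfl⟩)
  have hmemu : ∀ w : V ⊕ Unit, w ∈ T.neighborSet (Sum.inr ()) ↔ w = Sum.inl v := by
    intro w
    rw [SimpleGraph.mem_neighborSet, hadj]
    constructor
    · rintro (⟨p, q, hpq, hp, hq⟩ | ⟨h1, h2⟩ | ⟨h1, h2⟩)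
      · exact absurd hp (by simp)
      · exact absurd h1 (by simp)
      · exact h2
    · rintro rfl
      exact Or.inr (Or.inr ⟨rfl, rfl⟩)
  -- handy finiteness & counting abbreviations
  have hsing : ∀ (A : Set (V ⊕ Unit)) (z : V ⊕ Unit), A ⊆ {z} → A.ncard ≤ 1 := by
    intro A z h
    exact (Set.ncard_le_ncard h (Set.finite_singleton z)).trans_eq (Set.ncard_singleton z)
  have himg : ∀ (A : Set V), (Sum.inl '' A : Set (V ⊕ Unit)).ncard = A.ncard :=
    fun A => Set.ncard_image_of_injective A Sum.inl_injective
  -- γ(T) ≤ γ(T') + 1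
  have hgle : gammaK T 2 Set.univ ≤ gammaK T' 2 Set.univ + 1 := by
    obtain ⟨S', hS', hcardS'⟩ := gammaK_exists T' 2 Set.univ
    have hdom : IsKDomOn T 2 Set.univ (insert (Sum.inr ()) (Sum.inl '' S')) := by
      refine ⟨Set.subset_univ _, ?_⟩
      rintro (x | y) - hw
      · have hx : x ∉ S' := fun h => hw (Set.mem_insert_of_mem _ ⟨x, h, rfl⟩)
        have h2 := hS'.2 x (Set.mem_univ x) hx
        have hsub : Sum.inl '' (T'.neighborSet x ∩ S') ⊆
            T.neighborSet (Sum.inl x) ∩ insert (Sum.inr ()) (Sum.inl '' S') := by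
          rintro w ⟨y, ⟨hy1, hy2⟩, rfl⟩
          exact ⟨(hmem x _).mpr (Or.inl ⟨y, hy1, rfl⟩), Set.mem_insert_of_mem _ ⟨y, hy2, rfl⟩⟩
        calc (2 : ℕ) ≤ (T'.neighborSet x ∩ S').ncard := h2
          _ = (Sum.inl '' (T'.neighborSet x ∩ S')).ncard := (himg _).symm
          _ ≤ _ := Set.ncard_le_ncard hsub (Set.toFinite _)
      · exact absurd (Set.mem_insert _ _) (by cases y; exact hw)
    have hcard : (insert (Sum.inr ()) (Sum.inl '' S') : Set (V ⊕ Unit)).ncard = S'.ncard + 1 := by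
      rw [Set.ncard_insert_of_notMem (by rintro ⟨y, -, h⟩; exact Sum.inl_ne_inr h) (Set.toFinite _),
        himg]
    have := gammaK_le hdom
    omega
  -- γ(T') + 1 ≤ γ(T)
  have hgge : gammaK T' 2 Set.univ + 1 ≤ gammaK T 2 Set.univ := by
    obtain ⟨S, hS, hcardS⟩ := gammaK_exists T 2 Set.univ
    have hu : Sum.inr () ∈ S := by
      by_contra h
      have h2 := hS.2 _ (Set.mem_univ _) h
      have hsub : T.neighborSet (Sum.inr ()) ∩ S ⊆ {Sum.inl v} := fun w hw => (hmemu w).mp hw.1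
      have := hsing _ _ hsub
      omega
    have ha : Sum.inl a ∈ S := by
      by_contra h
      have h2 := hS.2 _ (Set.mem_univ _) h
      have hsub : T.neighborSet (Sum.inl a) ∩ S ⊆ {Sum.inl b} := by
        rintro w ⟨hw1, -⟩
        rcases (hmem a w).mp hw1 with ⟨y, hy, rfl⟩ | ⟨h1, -⟩
        · have : y ∈ T'.neighborSet a := hy
          rw [hNa] at this
          simp only [Set.mem_singleton_iff] at this
          rw [this]
          rfl
        · exact absurd h1 hav
      have := hsing _ _ hsub
      omega
    set S₀ : Set V := Sum.inl ⁻¹' S with hS₀def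
    have hScard : S.ncard = S₀.ncard + 1 := by
      have hSeq : S = insert (Sum.inr ()) (Sum.inl '' S₀) := by
        ext w
        rcases w with x | y
        · simp [hS₀def]
        · cases y; simp [hu]
      rw [hSeq, Set.ncard_insert_of_notMem (by rintro ⟨y, -, h⟩; exact Sum.inl_ne_inr h)
        (Set.toFinite _), himg]
    have hkey : ∀ x : V, x ≠ v → Sum.inl x ∉ S → 2 ≤ (T'.neighborSet x ∩ S₀).ncard := by
      intro x hxv hxS
      have h2 := hS.2 _ (Set.mem_univ _) hxS
      have heq : T.neighborSet (Sum.inl x) ∩ S = Sum.inl '' (T'.neighborSet x ∩ S₀) := by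
        ext w
        constructor
        · rintro ⟨hw1, hw2⟩
          rcases (hmem x w).mp hw1 with ⟨y, hy, rfl⟩ | ⟨h1, -⟩
          · exact ⟨y, ⟨hy, hw2⟩, rfl⟩
          · exact absurd h1 hxv
        · rintro ⟨y, ⟨hy1, hy2⟩, rfl⟩
          exact ⟨(hmem x _).mpr (Or.inl ⟨y, hy1, rfl⟩), hy2⟩
      rw [heq, himg] at h2
      exact h2
    by_cases hv : Sum.inl v ∈ S
    · have hdom : IsKDomOn T' 2 Set.univ S₀ :=
        ⟨Set.subset_univ _, fun x _ hx => hkey x (fun h => hx (show Sum.inl x ∈ S from h ▸ hv)) hx⟩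
      have := gammaK_le hdom
      omega
    · have hb : Sum.inl b ∈ S := by
        by_contra h
        have h2 := hS.2 _ (Set.mem_univ _) h
        have hsub : T.neighborSet (Sum.inl b) ∩ S ⊆ {Sum.inl a} := by
          rintro w ⟨hw1, hw2⟩
          rcases (hmem b w).mp hw1 with ⟨y, hy, rfl⟩ | ⟨h1, -⟩
          · have : y ∈ T'.neighborSet b := hy
            rw [hNb] at this
            rcases this with rfl | rfl
            · rfl
            · exact absurd hw2 hv
          · exact absurd h1 hbv'
        have := hsing _ _ hsub
        omega
      have hdom : IsKDomOn T' 2 Set.univ (insert v (S₀ \ {b})) := by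
        refine ⟨Set.subset_univ _, ?_⟩
        intro x _ hx
        have hxv : x ≠ v := fun h => hx (h ▸ Set.mem_insert _ _)
        by_cases hxb : x = b
        · subst hxb
          have hsub : ({a, v} : Set V) ⊆ T'.neighborSet x ∩ insert v (S₀ \ {x}) := by
            rintro y (rfl | rfl)
            · exact ⟨hab.symm, Set.mem_insert_of_mem _ ⟨ha, hab'⟩⟩
            · exact ⟨hbv, Set.mem_insert _ _⟩
          calc (2 : ℕ) = ({a, v} : Set V).ncard := (Set.ncard_pair hav).symm
            _ ≤ _ := Set.ncard_le_ncard hsub (Set.toFinite _)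
        · have hxS : Sum.inl x ∉ S := fun h => hx (Set.mem_insert_of_mem _ ⟨h, hxb⟩)
          refine (hkey x hxv hxS).trans (Set.ncard_le_ncard ?_ (Set.toFinite _))
          rintro y ⟨hy1, hy2⟩
          refine ⟨hy1, Set.mem_insert_of_mem _ ⟨hy2, ?_⟩⟩
          intro hyb
          rw [hyb] at hy1
          have hx' : x ∈ T'.neighborSet b := hy1.symm
          rw [hNb] at hx'
          rcases hx' with rfl | rfl
          · exact hxS ha
          · exact hxv rfl
      have hc0 : b ∈ S₀ := hb
      have hc1 : (S₀ \ {b}).ncard = S₀.ncard - 1 := Set.ncard_diff_singleton_of_mem hc0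
      have hc2 : (insert v (S₀ \ {b})).ncard ≤ (S₀ \ {b}).ncard + 1 := Set.ncard_insert_le _ _
      have hc3 : 1 ≤ S₀.ncard := by
        have : ({b} : Set V).ncard ≤ S₀.ncard :=
          Set.ncard_le_ncard (Set.singleton_subset_iff.mpr hc0) (Set.toFinite _)
        simpa using this
      have := gammaK_le hdom
      omega
  -- α(T) ≤ α(T') + 1
  have hale : alphaK T 2 Set.univ ≤ alphaK T' 2 Set.univ + 1 := by
    obtain ⟨S, hS, hcardS⟩ := alphaK_exists T 2 Set.univ
    set S₀ : Set V := Sum.inl ⁻¹' S with hS₀def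
    have hind : IsKIndOn T' 2 Set.univ S₀ := by
      refine ⟨Set.subset_univ _, ?_⟩
      intro x hx
      have h1 := hS.2 (Sum.inl x) hx
      have hsub : Sum.inl '' (T'.neighborSet x ∩ S₀) ⊆ T.neighborSet (Sum.inl x) ∩ S := by
        rintro w ⟨y, ⟨hy1, hy2⟩, rfl⟩
        exact ⟨(hmem x _).mpr (Or.inl ⟨y, hy1, rfl⟩), hy2⟩
      calc (T'.neighborSet x ∩ S₀).ncard = (Sum.inl '' (T'.neighborSet x ∩ S₀)).ncard := (himg _).symm
        _ ≤ (T.neighborSet (Sum.inl x) ∩ S).ncard := Set.ncard_le_ncard hsub (Set.toFinite _)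
        _ ≤ 2 - 1 := h1
    have hle : S.ncard ≤ S₀.ncard + 1 := by
      have hsub : S ⊆ insert (Sum.inr ()) (Sum.inl '' S₀) := by
        rintro (x | y) hw
        · exact Set.mem_insert_of_mem _ ⟨x, hw, rfl⟩
        · cases y; exact Set.mem_insert _ _
      calc S.ncard ≤ _ := Set.ncard_le_ncard hsub (Set.toFinite _)
        _ ≤ (Sum.inl '' S₀ : Set (V ⊕ Unit)).ncard + 1 := Set.ncard_insert_le _ _
        _ = S₀.ncard + 1 := by rw [himg]
    have := le_alphaK hind
    omega
  -- α(T') + 1 ≤ α(T)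
  have hage : alphaK T' 2 Set.univ + 1 ≤ alphaK T 2 Set.univ := by
    obtain ⟨S', hS', hcardS'⟩ := alphaK_exists T' 2 Set.univ
    -- the singleton bounds for the special vertices, valid for any ambient set
    by_cases hcase : v ∈ S' ∧ (T'.neighborSet v ∩ S').Nonempty
    · obtain ⟨hvS, -⟩ := hcase
      by_cases haS : a ∈ S'
      · -- b ∉ S'
        have hbS : b ∉ S' := by
          intro hbS
          have h1 := hS'.2 b hbS
          have hsub : ({a, v} : Set V) ⊆ T'.neighborSet b ∩ S' := by
            rintro y (rfl | rfl)
            · exact ⟨hab.symm, haS⟩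
            · exact ⟨hbv, hvS⟩
          have := (Set.ncard_pair hav) ▸ Set.ncard_le_ncard hsub (Set.toFinite _)
          omega
        set Snew : Set (V ⊕ Unit) :=
          insert (Sum.inr ()) (insert (Sum.inl b) (Sum.inl '' (S' \ {v}))) with hSnewdef
        have hnotmem : Sum.inl v ∉ Snew := by
          intro h
          simp only [hSnewdef, Set.mem_insert_iff, Set.mem_image] at h
          rcases h with h | h | ⟨y, hy, hy2⟩
          · exact absurd h (by simp)
          · exact hbv' (Sum.inl_injective h).symm
          · exact hy.2 (Sum.inl_injective hy2)
        have hind : IsKIndOn T 2 Set.univ Snew := by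
          refine ⟨Set.subset_univ _, ?_⟩
          rintro w hw
          simp only [hSnewdef, Set.mem_insert_iff, Set.mem_image] at hw
          rcases hw with rfl | rfl | ⟨x, hx, rfl⟩
          · exact hsing _ (Sum.inl v) (fun w hw => (hmemu w).mp hw.1)
          · refine hsing _ (Sum.inl a) ?_
            rintro w ⟨hw1, hw2⟩
            rcases (hmem b w).mp hw1 with ⟨y, hy, rfl⟩ | ⟨h1, -⟩
            · have hy' : y ∈ T'.neighborSet b := hy
              rw [hNb] at hy'
              rcases hy' with rfl | rfl
              · rfl
              · exact absurd hw2 hnotmem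
            · exact absurd h1 hbv'
          · by_cases hxa : x = a
            · subst hxa
              refine hsing _ (Sum.inl b) ?_
              rintro w ⟨hw1, -⟩
              rcases (hmem x w).mp hw1 with ⟨y, hy, rfl⟩ | ⟨h1, -⟩
              · have hy' : y ∈ T'.neighborSet x := hy
                rw [hNa] at hy'
                rw [hy']
                rfl
              · exact absurd h1 hav
            · have hsub : T.neighborSet (Sum.inl x) ∩ Snew ⊆ Sum.inl '' (T'.neighborSet x ∩ S') := by
                rintro w ⟨hw1, hw2⟩
                rcases (hmem x w).mp hw1 with ⟨y, hy, rfl⟩ | ⟨h1, -⟩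
                · simp only [hSnewdef, Set.mem_insert_iff, Set.mem_image] at hw2
                  rcases hw2 with h | h | ⟨z, hz, hz2⟩
                  · exact absurd h (by simp)
                  · have hyb : y = b := Sum.inl_injective h
                    rw [hyb] at hy
                    have hx' : x ∈ T'.neighborSet b := hy.symm
                    rw [hNb] at hx'
                    simp only [Set.mem_insert_iff, Set.mem_singleton_iff] at hx'
                    rcases hx' with h' | h'
                    · exact absurd h' hxa
                    · exact absurd h' hx.2
                  · have hzy : z = y := Sum.inl_injective hz2
                    refine ⟨z, ⟨?_, hz.1⟩, hz2⟩
                    rw [hzy]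
                    exact hy
                · exact absurd h1 hx.2
              calc (T.neighborSet (Sum.inl x) ∩ Snew).ncard
                  ≤ (Sum.inl '' (T'.neighborSet x ∩ S')).ncard :=
                    Set.ncard_le_ncard hsub (Set.toFinite _)
                _ = (T'.neighborSet x ∩ S').ncard := himg _
                _ ≤ 2 - 1 := hS'.2 x hx.1
        have hcard : Snew.ncard = S'.ncard + 1 := by
          have h1 : (Sum.inl b : V ⊕ Unit) ∉ Sum.inl '' (S' \ {v}) := by
            rintro ⟨y, hy, hyb⟩
            rw [Sum.inl.injEq] at hyb
            exact hbS (hyb ▸ hy.1)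
          have h2 : (Sum.inr () : V ⊕ Unit) ∉ insert (Sum.inl b) (Sum.inl '' (S' \ {v})) := by
            simp
          have h3 : 1 ≤ S'.ncard := by
            have : ({v} : Set V).ncard ≤ S'.ncard :=
              Set.ncard_le_ncard (Set.singleton_subset_iff.mpr hvS) (Set.toFinite _)
            simpa using this
          rw [hSnewdef, Set.ncard_insert_of_notMem h2 (Set.toFinite _),
            Set.ncard_insert_of_notMem h1 (Set.toFinite _), himg,
            Set.ncard_diff_singleton_of_mem hvS]
          omega
        have := le_alphaK hind
        omega
      · -- a ∉ S'
        set Snew : Set (V ⊕ Unit) :=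
          insert (Sum.inr ()) (insert (Sum.inl a) (Sum.inl '' (S' \ {v}))) with hSnewdef
        have hnotmem : Sum.inl v ∉ Snew := by
          intro h
          simp only [hSnewdef, Set.mem_insert_iff, Set.mem_image] at h
          rcases h with h | h | ⟨y, hy, hy2⟩
          · exact absurd h (by simp)
          · exact hav (Sum.inl_injective h).symm
          · exact hy.2 (Sum.inl_injective hy2)
        have hind : IsKIndOn T 2 Set.univ Snew := by
          refine ⟨Set.subset_univ _, ?_⟩
          rintro w hw
          simp only [hSnewdef, Set.mem_insert_iff, Set.mem_image] at hw
          rcases hw with rfl | rfl | ⟨x, hx, rfl⟩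
          · exact hsing _ (Sum.inl v) (fun w hw => (hmemu w).mp hw.1)
          · refine hsing _ (Sum.inl b) ?_
            rintro w ⟨hw1, -⟩
            rcases (hmem a w).mp hw1 with ⟨y, hy, rfl⟩ | ⟨h1, -⟩
            · have hy' : y ∈ T'.neighborSet a := hy
              rw [hNa] at hy'
              rw [hy']
              rfl
            · exact absurd h1 hav
          · by_cases hxb : x = b
            · subst hxb
              refine hsing _ (Sum.inl a) ?_
              rintro w ⟨hw1, hw2⟩
              rcases (hmem x w).mp hw1 with ⟨y, hy, rfl⟩ | ⟨h1, -⟩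
              · have hy' : y ∈ T'.neighborSet x := hy
                rw [hNb] at hy'
                rcases hy' with rfl | rfl
                · rfl
                · exact absurd hw2 hnotmem
              · exact absurd h1 hbv'
            · have hsub : T.neighborSet (Sum.inl x) ∩ Snew ⊆ Sum.inl '' (T'.neighborSet x ∩ S') := by
                rintro w ⟨hw1, hw2⟩
                rcases (hmem x w).mp hw1 with ⟨y, hy, rfl⟩ | ⟨h1, -⟩
                · simp only [hSnewdef, Set.mem_insert_iff, Set.mem_image] at hw2
                  rcases hw2 with h | h | ⟨z, hz, hz2⟩
                  · exact absurd h (by simp)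
                  · have hya : y = a := Sum.inl_injective h
                    rw [hya] at hy
                    have hx' : x ∈ T'.neighborSet a := hy.symm
                    rw [hNa] at hx'
                    exact absurd hx' hxb
                  · have hzy : z = y := Sum.inl_injective hz2
                    refine ⟨z, ⟨?_, hz.1⟩, hz2⟩
                    rw [hzy]
                    exact hy
                · exact absurd h1 hx.2
              calc (T.neighborSet (Sum.inl x) ∩ Snew).ncard
                  ≤ (Sum.inl '' (T'.neighborSet x ∩ S')).ncard :=
                    Set.ncard_le_ncard hsub (Set.toFinite _)
                _ = (T'.neighborSet x ∩ S').ncard := himg _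
                _ ≤ 2 - 1 := hS'.2 x hx.1
        have hcard : Snew.ncard = S'.ncard + 1 := by
          have h1 : (Sum.inl a : V ⊕ Unit) ∉ Sum.inl '' (S' \ {v}) := by
            rintro ⟨y, hy, hyb⟩
            rw [Sum.inl.injEq] at hyb
            exact haS (hyb ▸ hy.1)
          have h2 : (Sum.inr () : V ⊕ Unit) ∉ insert (Sum.inl a) (Sum.inl '' (S' \ {v})) := by
            simp
          have h3 : 1 ≤ S'.ncard := by
            have : ({v} : Set V).ncard ≤ S'.ncard :=
              Set.ncard_le_ncard (Set.singleton_subset_iff.mpr hvS) (Set.toFinite _)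
            simpa using this
          rw [hSnewdef, Set.ncard_insert_of_notMem h2 (Set.toFinite _),
            Set.ncard_insert_of_notMem h1 (Set.toFinite _), himg,
            Set.ncard_diff_singleton_of_mem hvS]
          omega
        have := le_alphaK hind
        omega
    · -- case A : v ∉ S' or v has no neighbor in S'
      set Snew : Set (V ⊕ Unit) := insert (Sum.inr ()) (Sum.inl '' S') with hSnewdef
      have hind : IsKIndOn T 2 Set.univ Snew := by
        refine ⟨Set.subset_univ _, ?_⟩
        rintro w hw
        simp only [hSnewdef, Set.mem_insert_iff, Set.mem_image] at hw
        rcases hw with rfl | ⟨x, hx, rfl⟩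
        · exact hsing _ (Sum.inl v) (fun w hw => (hmemu w).mp hw.1)
        · by_cases hxv : x = v
          · subst hxv
            have hempty : T'.neighborSet x ∩ S' = ∅ := by
              by_contra h
              exact hcase ⟨hx, Set.nonempty_iff_ne_empty.mpr h⟩
            refine hsing _ (Sum.inr ()) ?_
            rintro w ⟨hw1, hw2⟩
            rcases (hmem x w).mp hw1 with ⟨y, hy, rfl⟩ | ⟨-, rfl⟩
            · simp only [hSnewdef, Set.mem_insert_iff, Set.mem_image] at hw2
              rcases hw2 with h | ⟨z, hz, hz2⟩
              · exact absurd h (by simp)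
              · have hzy : z = y := Sum.inl_injective hz2
                rw [hzy] at hz
                have hcontr : y ∈ T'.neighborSet x ∩ S' := ⟨hy, hz⟩
                rw [hempty] at hcontr
                exact absurd hcontr (Set.notMem_empty y)
            · rfl
          · have hsub : T.neighborSet (Sum.inl x) ∩ Snew ⊆ Sum.inl '' (T'.neighborSet x ∩ S') := by
              rintro w ⟨hw1, hw2⟩
              rcases (hmem x w).mp hw1 with ⟨y, hy, rfl⟩ | ⟨h1, -⟩
              · simp only [hSnewdef, Set.mem_insert_iff, Set.mem_image] at hw2
                rcases hw2 with h | ⟨z, hz, hz2⟩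
                · exact absurd h (by simp)
                · have hzy : z = y := Sum.inl_injective hz2
                  refine ⟨z, ⟨?_, hz⟩, hz2⟩
                  rw [hzy]
                  exact hy
              · exact absurd h1 hxv
            calc (T.neighborSet (Sum.inl x) ∩ Snew).ncard
                ≤ (Sum.inl '' (T'.neighborSet x ∩ S')).ncard :=
                  Set.ncard_le_ncard hsub (Set.toFinite _)
              _ = (T'.neighborSet x ∩ S').ncard := himg _
              _ ≤ 2 - 1 := hS'.2 x hx
      have hcard : Snew.ncard = S'.ncard + 1 := by
        rw [hSnewdef, Set.ncard_insert_of_notMem (by rintro ⟨y, -, h⟩; exact Sum.inl_ne_inr h)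
          (Set.toFinite _), himg]
      have := le_alphaK hind
      omega
  have hg := le_antisymm hgle hgge
  have ha' := le_antisymm hale hage
  refine ⟨hg, ha', ?_⟩
  rw [hg, ha']
  push_cast
  ring
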